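/- Let L be a nonempty finite generic contact system of line segments in ℝ². Then the intersection graph of L is (2,3)-sparse; explicitly, for every subset L′ ⊆ L that contains at least one contact (i.e. some endpoint of a segment of L′ lies in the interior of a segment of L′), the number of contacts of L′ — that is, the number of pairs (x, m) with m ∈ L′ and x an endpoint of a segment of L′ lying in the interior of m — is at most 2|L′| − 3. -/

import Mathlib

noncomputable section

/-- The Euclidean plane. -/
abbrev Pt := EuclideanSpace ℝ (Fin 2)

/-- `S` is a (nondegenerate, closed) line segment in the plane. -/
def IsSeg (S : Set Pt) : Prop := ∃ p q : Pt, p ≠ q ∧ S = segment ℝ p q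

/-- `x` is an endpoint of the segment `S`. -/
def IsEndpt (x : Pt) (S : Set Pt) : Prop :=
  ∃ p q : Pt, p ≠ q ∧ S = segment ℝ p q ∧ (x = p ∨ x = q)

/-- `x` is an interior (relative interior) point of the segment `S`. -/
def IsIntPt (x : Pt) (S : Set Pt) : Prop :=
  ∃ p q : Pt, p ≠ q ∧ S = segment ℝ p q ∧ x ∈ openSegment ℝ p q

/-- A contact system: a collection of (pairwise distinct) segments such that no
point of the plane is an interior point of more than one segment. -/
def IsContactSystem (L : Set (Set Pt)) : Prop :=
  (∀ S ∈ L, IsSeg S) ∧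
  ∀ x : Pt, ∀ S ∈ L, ∀ T ∈ L, IsIntPt x S → IsIntPt x T → S = T

/-- A 2-contact system: a contact system such that every point of the plane
belongs to at most two of the segments. -/
def Is2ContactSystem (L : Set (Set Pt)) : Prop :=
  IsContactSystem L ∧
  ∀ x : Pt, ∀ S ∈ L, ∀ T ∈ L, ∀ U ∈ L,
    x ∈ S → x ∈ T → x ∈ U → (S = T ∨ S = U ∨ T = U)

/-- A generic contact system: a contact system such that moreover no point of
the plane is an endpoint of more than one segment. -/
def IsGenericCS (L : Set (Set Pt)) : Prop :=
  IsContactSystem L ∧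
  ∀ x : Pt, ∀ S ∈ L, ∀ T ∈ L, IsEndpt x S → IsEndpt x T → S = T

/-- `x` is a free endpoint of the family `M`: an endpoint of some segment of `M`
that lies in the interior of no segment of `M`. -/
def IsFreeEndpt (x : Pt) (M : Set (Set Pt)) : Prop :=
  (∃ l ∈ M, IsEndpt x l) ∧ ∀ m ∈ M, ¬ IsIntPt x m

/-- The group of isometries of the plane (every isometry of the plane is affine). -/
abbrev Iso2 := Pt ≃ᵃⁱ[ℝ] Pt

/-- The determinant of the linear part of a plane isometry. -/
def detOf (g : Iso2) : ℝ :=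
  LinearMap.det g.linearIsometryEquiv.toLinearEquiv.toLinearMap

/-- A rotation: a non-identity orientation-preserving isometry with a fixed point. -/
def IsRotation (g : Iso2) : Prop := g ≠ 1 ∧ detOf g = 1 ∧ ∃ x : Pt, g x = x

/-- A reflection: an orientation-reversing isometry with a fixed point. -/
def IsReflection (g : Iso2) : Prop := detOf g ≠ 1 ∧ ∃ x : Pt, g x = x

/-- A translation: the map `x ↦ x + v` for some `v ≠ 0`. -/
def IsTranslation (g : Iso2) : Prop := ∃ v : Pt, v ≠ 0 ∧ ∀ x : Pt, g x = x + v

/-- (S1): the collection `L` of segments is invariant under `Γ`. -/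
def SatS1 (Γ : Subgroup Iso2) (L : Set (Set Pt)) : Prop :=
  ∀ l ∈ L, ∀ g ∈ Γ, (⇑g) '' l ∈ L

/-- (S2): `L` has finitely many `Γ`-orbits. -/
def SatS2 (Γ : Subgroup Iso2) (L : Set (Set Pt)) : Prop :=
  ∃ T : Set (Set Pt), T.Finite ∧ T ⊆ L ∧
    ∀ l ∈ L, ∃ t ∈ T, ∃ g ∈ Γ, (⇑g) '' t = l

/-- (S4): for every `l ∈ L` and every `x ∈ l` the stabiliser of `x` in `Γ` is trivial. -/
def SatS4 (Γ : Subgroup Iso2) (L : Set (Set Pt)) : Prop :=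
  ∀ l ∈ L, ∀ x ∈ l, ∀ g ∈ Γ, g x = x → g = 1

/-- A subgroup of the isometry group of the plane is discrete iff (equivalently,
for subgroups of `Isom(ℝ²)`, in the natural topology) each of its orbits is a
discrete subset of the plane. -/
def IsDiscreteSubgrp (Γ : Subgroup Iso2) : Prop :=
  ∀ x : Pt, DiscreteTopology {y : Pt | ∃ g ∈ Γ, g x = y}

/-- A generic `Γ`-symmetric contact system: satisfies (S1)-(S4). -/
def IsGenSymmCS (Γ : Subgroup Iso2) (L : Set (Set Pt)) : Prop :=
  IsGenericCS L ∧ SatS1 Γ L ∧ SatS2 Γ L ∧ SatS4 Γ L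

end

/-- The contacts of a family `L'` of segments: pairs `(x, m)` where `m ∈ L'`
and `x` is an endpoint of some segment of `L'` lying in the interior of `m`. -/
def contactsOf (L' : Set (Set Pt)) : Set (Pt × Set Pt) :=
  {c | c.2 ∈ L' ∧ (∃ l ∈ L', IsEndpt c.1 l) ∧ IsIntPt c.1 c.2}

section Aux

open Set

lemma seg_endpt_eq {a b p q : Pt} (hab : a ≠ b)
    (h : segment ℝ a b = segment ℝ p q) : a = p ∨ a = q := by
  by_contra hcon
  push_neg at hcon
  obtain ⟨hap, haq⟩ := hcon
  have haseg : a ∈ segment ℝ p q := h ▸ left_mem_segment ℝ a b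
  have haopen : a ∈ openSegment ℝ p q := by
    rw [← insert_endpoints_openSegment] at haseg
    rcases haseg with rfl | rfl | haseg
    · exact absurd rfl hap
    · exact absurd rfl haq
    · exact haseg
  rw [openSegment_eq_image'] at haopen
  obtain ⟨σ, ⟨hσ0, hσ1⟩, hσ⟩ := haopen
  have hp : p ∈ segment ℝ a b := h.symm ▸ left_mem_segment ℝ p q
  have hq : q ∈ segment ℝ a b := h.symm ▸ right_mem_segment ℝ p q
  rw [segment_eq_image'] at hp hq
  obtain ⟨s, ⟨hs0, _⟩, hs⟩ := hp
  obtain ⟨t, ⟨ht0, _⟩, ht⟩ := hq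
  have hv : ((1 - σ) * s + σ * t) • (b - a) = (0 : Pt) := by
    rw [← hs, ← ht] at hσ
    linear_combination (norm := module) hσ
  have hz : (1 - σ) * s + σ * t = 0 := by
    rcases smul_eq_zero.mp hv with h' | h'
    · exact h'
    · exact absurd (sub_eq_zero.mp h') (Ne.symm hab)
  have hs0' : s = 0 := by nlinarith
  apply hap
  rw [← hs, hs0']
  simp

lemma isEndpt_eq {l : Set Pt} {p q : Pt} (hpq : p ≠ q) (hl : l = segment ℝ p q)
    {x : Pt} (hx : IsEndpt x l) : x = p ∨ x = q := by
  obtain ⟨a, b, hab, hl', hx⟩ := hx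
  have hseg : segment ℝ a b = segment ℝ p q := by rw [← hl', hl]
  rcases hx with rfl | rfl
  · exact seg_endpt_eq hab hseg
  · exact seg_endpt_eq hab.symm (by rw [segment_symm]; exact hseg)

lemma not_endpt_int {x : Pt} {l : Set Pt} (he : IsEndpt x l) (hi : IsIntPt x l) : False := by
  obtain ⟨p, q, hpq, hl, hx⟩ := hi
  rcases isEndpt_eq hpq hl he with rfl | rfl
  · exact hpq (left_mem_openSegment_iff.mp hx)
  · exact hpq (right_mem_openSegment_iff.mp hx)

lemma real_between {tp tq ta tb : ℝ} (htpq : tp ≠ tq)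
    (h1 : ta ∈ openSegment ℝ tp tq) (h2 : tb ≠ ta) :
    ∃ t, t ∈ openSegment ℝ tp tq ∧ t ∈ openSegment ℝ ta tb := by
  rw [openSegment_eq_Ioo' htpq] at h1 ⊢
  obtain ⟨hm, hM⟩ := h1
  have habs : 0 < |tb - ta| := abs_pos.mpr (sub_ne_zero.mpr h2)
  set δ : ℝ := min (ta - min tp tq) (max tp tq - ta) with hδ
  have hδpos : 0 < δ := lt_min (by linarith) (by linarith)
  set ε : ℝ := min (1 / 2) (δ / (2 * |tb - ta|)) with hε
  have hεpos : 0 < ε := lt_min (by norm_num) (div_pos hδpos (by positivity))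
  have hεlt1 : ε < 1 := lt_of_le_of_lt (min_le_left _ _) (by norm_num)
  have hkey : |ε * (tb - ta)| < δ := by
    rw [abs_mul, abs_of_pos hεpos]
    have h5 : ε ≤ δ / (2 * |tb - ta|) := min_le_right _ _
    calc ε * |tb - ta| ≤ (δ / (2 * |tb - ta|)) * |tb - ta| := by nlinarith
      _ = δ / 2 := by field_simp [habs.ne']
      _ < δ := by linarith
  have h3 := abs_lt.mp hkey
  refine ⟨ta + ε * (tb - ta), ⟨?_, ?_⟩, ?_⟩
  · have h4 : δ ≤ ta - min tp tq := min_le_left _ _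
    linarith [h3.1]
  · have h4 : δ ≤ max tp tq - ta := min_le_right _ _
    linarith [h3.2]
  · rw [openSegment_eq_image']
    exact ⟨ε, ⟨hεpos, hεlt1⟩, by simp [smul_eq_mul]⟩

lemma common_int {u v p q a b : Pt}
    (hp : p ∈ segment ℝ u v) (hq : q ∈ segment ℝ u v) (hb : b ∈ segment ℝ u v)
    (hpq : p ≠ q) (hab : a ≠ b) (ha : a ∈ openSegment ℝ p q) :
    ∃ z, z ∈ openSegment ℝ p q ∧ z ∈ openSegment ℝ a b := by
  have huv : u ≠ v := by
    rintro rfl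
    rw [segment_same, mem_singleton_iff] at hp hq
    exact hpq (hp.trans hq.symm)
  set f : ℝ →ᵃ[ℝ] Pt := AffineMap.lineMap u v with hf
  rw [segment_eq_image_lineMap] at hp hq hb
  obtain ⟨tp, _, hfp⟩ := hp
  obtain ⟨tq, _, hfq⟩ := hq
  obtain ⟨tb, _, hfb⟩ := hb
  have ha' : a ∈ ⇑f '' openSegment ℝ tp tq := by
    rw [image_openSegment, hfp, hfq]; exact ha
  obtain ⟨ta, hta, hfa⟩ := ha'
  have htpq : tp ≠ tq := fun h => hpq (show p = q by rw [← hfp, ← hfq, h])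
  have htab : tb ≠ ta := fun h => hab (show a = b by rw [← hfa, ← hfb, h])
  obtain ⟨t, ht1, ht2⟩ := real_between htpq hta htab
  refine ⟨f t, ?_, ?_⟩
  · rw [← hfp, ← hfq, ← image_openSegment]; exact mem_image_of_mem f ht1
  · rw [← hfa, ← hfb, ← image_openSegment]; exact mem_image_of_mem f ht2

lemma endptSet_subset {l : Set Pt} {p q : Pt} (hpq : p ≠ q) (hl : l = segment ℝ p q) :
    {x : Pt | IsEndpt x l} ⊆ {p, q} := by
  intro x hx
  rcases isEndpt_eq hpq hl hx with rfl | rfl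
  · exact Or.inl rfl
  · exact Or.inr rfl

lemma endpts_card : ∀ S : Set (Set Pt), S.Finite → (∀ l ∈ S, IsSeg l) →
    {x : Pt | ∃ l ∈ S, IsEndpt x l}.Finite ∧
      {x : Pt | ∃ l ∈ S, IsEndpt x l}.ncard ≤ 2 * S.ncard := by
  intro S hS
  refine Set.Finite.induction_on
    (motive := fun S _ => (∀ l ∈ S, IsSeg l) → ({x : Pt | ∃ l ∈ S, IsEndpt x l}.Finite ∧
      {x : Pt | ∃ l ∈ S, IsEndpt x l}.ncard ≤ 2 * S.ncard)) S hS (fun _ => ⟨by simp, by simp⟩) ?_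
  intro l S hlS hSfin ih hseg'
  obtain ⟨p, q, hpq, hl⟩ := hseg' l (mem_insert l S)
  obtain ⟨hrfin, hrcard⟩ := ih (fun m hm => hseg' m (mem_insert_of_mem _ hm))
  have hsplit : {x : Pt | ∃ m ∈ insert l S, IsEndpt x m}
      = {x : Pt | IsEndpt x l} ∪ {x : Pt | ∃ m ∈ S, IsEndpt x m} := by
    ext x
    simp only [mem_setOf_eq, mem_insert_iff, mem_union]
    constructor
    · rintro ⟨m, rfl | hm, hx⟩
      · exact Or.inl hx
      · exact Or.inr ⟨m, hm, hx⟩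
    · rintro (hx | ⟨m, hm, hx⟩)
      · exact ⟨l, Or.inl rfl, hx⟩
      · exact ⟨m, Or.inr hm, hx⟩
  have h1 := endptSet_subset hpq hl
  have h1f : {x : Pt | IsEndpt x l}.Finite := (Set.toFinite ({p, q} : Set Pt)).subset h1
  have h1c : {x : Pt | IsEndpt x l}.ncard ≤ 2 := by
    have := Set.ncard_le_ncard h1 (Set.toFinite _)
    rwa [Set.ncard_pair hpq] at this
  constructor
  · rw [hsplit]; exact h1f.union hrfin
  · rw [hsplit]
    have hu := Set.ncard_union_le {x : Pt | IsEndpt x l} {x : Pt | ∃ m ∈ S, IsEndpt x m}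
    rw [Set.ncard_insert_of_notMem hlS hSfin]
    omega

end Aux

open Set in
theorem stmt_1 (L : Set (Set Pt)) (hfin : L.Finite) (hne : L.Nonempty)
    (hL : IsGenericCS L) :
    ∀ L' ⊆ L, (contactsOf L').Nonempty →
      (contactsOf L').ncard + 3 ≤ 2 * L'.ncard := by
  intro L' hsub hCne
  obtain ⟨⟨hIsSeg, hInt⟩, hEnd⟩ := hL
  have hfin' : L'.Finite := hfin.subset hsub
  set E : Set Pt := {x : Pt | ∃ l ∈ L', IsEndpt x l} with hE
  obtain ⟨hEfin, hEcard⟩ := endpts_card L' hfin' (fun l hl => hIsSeg l (hsub hl))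
  rw [← hE] at hEcard hEfin
  set A : Set Pt := Prod.fst '' contactsOf L' with hA
  have hCsub : contactsOf L' ⊆ E ×ˢ L' := by
    rintro ⟨x, m⟩ hc
    exact ⟨hc.2.1, hc.1⟩
  have hCfin : (contactsOf L').Finite := ((hEfin.prod hfin').subset hCsub)
  have hinj : Set.InjOn Prod.fst (contactsOf L') := by
    rintro ⟨x1, m1⟩ h1 ⟨x2, m2⟩ h2 h
    obtain rfl : x1 = x2 := h
    have : m1 = m2 := hInt x1 m1 (hsub h1.1) m2 (hsub h2.1) h1.2.2 h2.2.2
    rw [this]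
  have hAcard : (contactsOf L').ncard = A.ncard := (Set.ncard_image_of_injOn hinj).symm
  have hAE : A ⊆ E := by rintro x ⟨c, hc, rfl⟩; exact hc.2.1
  have hUsub : ∀ l ∈ L', l ⊆ convexHull ℝ E := by
    intro l hl
    obtain ⟨p, q, hpq, hlpq⟩ := hIsSeg l (hsub hl)
    have hpE : p ∈ E := ⟨l, hl, p, q, hpq, hlpq, Or.inl rfl⟩
    have hqE : q ∈ E := ⟨l, hl, p, q, hpq, hlpq, Or.inr rfl⟩
    rw [hlpq]
    exact (convex_convexHull ℝ E).segment_subset (subset_convexHull ℝ E hpE)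
      (subset_convexHull ℝ E hqE)
  set P := (convexHull ℝ E).extremePoints ℝ with hP
  have hfreeE : ∀ e ∈ P, e ∈ E := fun e he => extremePoints_convexHull_subset he
  have hfreeA : ∀ e ∈ P, e ∉ A := by
    intro e he heA
    obtain ⟨⟨x, m⟩, hc, rfl⟩ := heA
    obtain ⟨p', q', hp'q', hm, hopen⟩ := hc.2.2
    have hmseg' : m = segment ℝ p' q' := hm
    have hp's : p' ∈ convexHull ℝ E := hUsub m hc.1 (hmseg' ▸ left_mem_segment ℝ p' q')
    have hq's : q' ∈ convexHull ℝ E := hUsub m hc.1 (hmseg' ▸ right_mem_segment ℝ p' q')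
    obtain ⟨hh1, hh2⟩ := (mem_extremePoints.mp he).2 p' hp's q' hq's hopen
    exact hp'q' (hh1.trans hh2.symm)
  have hthree : ∃ e₁ e₂ e₃ : Pt, e₁ ∈ P ∧ e₂ ∈ P ∧ e₃ ∈ P ∧ e₁ ≠ e₂ ∧ e₁ ≠ e₃ ∧ e₂ ≠ e₃ := by
    by_contra hcon
    push_neg at hcon
    obtain ⟨u, v, hPuv⟩ : ∃ u v : Pt, P ⊆ {u, v} := by
      rcases P.eq_empty_or_nonempty with hPe | ⟨u, hu⟩
      · exact ⟨0, 0, by rw [hPe]; exact empty_subset _⟩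
      by_cases hv : ∃ v ∈ P, v ≠ u
      · obtain ⟨v, hvP, hvu⟩ := hv
        refine ⟨u, v, fun w hw => ?_⟩
        by_contra hw'
        simp only [mem_insert_iff, mem_singleton_iff] at hw'
        push_neg at hw'
        exact hw'.2 (hcon u v w hu hvP hw (Ne.symm hvu) (Ne.symm hw'.1)).symm
      · push_neg at hv
        exact ⟨u, u, fun w hw => Or.inl (hv w hw)⟩
    have hcompE : IsCompact (convexHull ℝ E) := hEfin.isCompact_convexHull ℝ
    have hsegcl : IsClosed (segment ℝ u v) := by
      rw [← convexHull_pair]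
      exact (Set.toFinite ({u, v} : Set Pt)).isCompact_convexHull ℝ |>.isClosed
    have hhull : convexHull ℝ E ⊆ segment ℝ u v := by
      rw [← closure_convexHull_extremePoints hcompE (convex_convexHull ℝ E)]
      refine closure_minimal (convexHull_min ?_ (convex_segment u v)) hsegcl
      intro w hw
      rcases hPuv hw with h | h
      · rw [h]; exact left_mem_segment ℝ u v
      · rw [mem_singleton_iff] at h; rw [h]; exact right_mem_segment ℝ u v
    obtain ⟨⟨x, m⟩, hc⟩ := hCne
    obtain ⟨hm, ⟨l, hlL, hxl⟩, hxint⟩ := hc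
    obtain ⟨p, q, hpq, hmseg0, hxopen⟩ := hxint
    have hmseg : m = segment ℝ p q := hmseg0
    clear hmseg0
    obtain ⟨a₀, b₀, hab₀, hlseg₀, hxe⟩ := hxl
    obtain ⟨b, hxb, hlseg⟩ : ∃ b : Pt, x ≠ b ∧ l = segment ℝ x b := by
      rcases hxe with rfl | rfl
      · exact ⟨b₀, hab₀, hlseg₀⟩
      · exact ⟨a₀, hab₀.symm, by rw [hlseg₀, segment_symm]⟩
    have hlm : l ≠ m := by
      intro h
      exact not_endpt_int ⟨x, b, hxb, hlseg, Or.inl rfl⟩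
        ⟨p, q, hpq, by rw [h]; exact hmseg, hxopen⟩
    have hpin : p ∈ segment ℝ u v := hhull (hUsub m hm (hmseg ▸ left_mem_segment ℝ p q))
    have hqin : q ∈ segment ℝ u v := hhull (hUsub m hm (hmseg ▸ right_mem_segment ℝ p q))
    have hbin : b ∈ segment ℝ u v := hhull (hUsub l hlL (hlseg ▸ right_mem_segment ℝ x b))
    obtain ⟨z, hz1, hz2⟩ := common_int hpin hqin hbin hpq hxb hxopen
    exact hlm (hInt z l (hsub hlL) m (hsub hm) ⟨x, b, hxb, hlseg, hz2⟩ ⟨p, q, hpq, hmseg, hz1⟩)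
  obtain ⟨e₁, e₂, e₃, h1, h2, h3, h12, h13, h23⟩ := hthree
  set T : Set Pt := {e₁, e₂, e₃} with hT
  have hTE : T ⊆ E := by
    intro w hw
    simp only [hT, mem_insert_iff, mem_singleton_iff] at hw
    rcases hw with rfl | rfl | rfl
    exacts [hfreeE _ h1, hfreeE _ h2, hfreeE _ h3]
  have hTA : Disjoint A T := by
    rw [Set.disjoint_right]
    intro w hw
    simp only [hT, mem_insert_iff, mem_singleton_iff] at hw
    rcases hw with rfl | rfl | rfl
    exacts [hfreeA _ h1, hfreeA _ h2, hfreeA _ h3]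
  have hTcard : T.ncard = 3 := Set.ncard_eq_three.mpr ⟨e₁, e₂, e₃, h12, h13, h23, rfl⟩
  have hAfin : A.Finite := hCfin.image _
  have hunion : A.ncard + 3 = (A ∪ T).ncard := by
    rw [Set.ncard_union_eq hTA hAfin (Set.toFinite T), hTcard]
  have hle : (A ∪ T).ncard ≤ E.ncard := Set.ncard_le_ncard (union_subset hAE hTE) hEfin
  rw [hAcard]
  omega
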